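/- Let q = p^h and let P be the union of λp+1 distinct lines through a common point of PG(2,q), for some 0 ≤ λ ≤ p^(h-1). Then P is a ghost, i.e., its power sum polynomial is identically zero. -/

import Mathlib

open MvPolynomial
open scoped LinearAlgebra.Projectivization

/-- The Rédei factor of a point of `PG(n,q)`. -/
noncomputable def redeiFactor {F : Type*} [Field F] {n : ℕ}
    (P : ℙ F (Fin n → F)) : MvPolynomial (Fin n) F :=
  ∑ i, C (P.rep i) * X i

/-- The power sum polynomial of a finite set of points of `PG(n,q)`. -/
noncomputable def powerSum {F : Type*} [Field F] [Fintype F] {n : ℕ}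
    (S : Finset (ℙ F (Fin n → F))) : MvPolynomial (Fin n) F :=
  ∑ P ∈ S, redeiFactor P ^ (Fintype.card F - 1)


/-- The line of PG(2,q) with Plücker coordinates ℓ, as a finite set of points. -/
noncomputable def lineFinset {F : Type*} [Field F] [DecidableEq F]
    [Fintype (ℙ F (Fin 3 → F))] (ℓ : Fin 3 → F) : Finset (ℙ F (Fin 3 → F)) :=
  Finset.univ.filter fun P => ∑ i, ℓ i * P.rep i = 0

section Aux

variable {F : Type*} [Field F]

/-- The linear form with coefficients ℓ. -/
noncomputable def lform (ℓ : Fin 3 → F) : (Fin 3 → F) →ₗ[F] F where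
  toFun v := ∑ i, ℓ i * v i
  map_add' u v := by simp [mul_add, Finset.sum_add_distrib]
  map_smul' c v := by simp [Finset.mul_sum, mul_left_comm]

@[simp] lemma lform_apply (ℓ v : Fin 3 → F) : lform ℓ v = ∑ i, ℓ i * v i := rfl

lemma mem_lineFinset [DecidableEq F] [Fintype (ℙ F (Fin 3 → F))]
    {ℓ : Fin 3 → F} {P : ℙ F (Fin 3 → F)} :
    P ∈ lineFinset ℓ ↔ lform ℓ P.rep = 0 := by
  simp [lineFinset]

lemma two_le_finrank_ker (ℓ : Fin 3 → F) :
    2 ≤ Module.finrank F (LinearMap.ker (lform ℓ)) := by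
  have h := LinearMap.finrank_range_add_finrank_ker (lform ℓ)
  rw [Module.finrank_fin_fun] at h
  have h2 : Module.finrank F (LinearMap.range (lform ℓ)) ≤ 1 := by
    simpa using Submodule.finrank_le (LinearMap.range (lform ℓ))
  omega

lemma finrank_ker_eq_two {ℓ : Fin 3 → F} (hℓ : ℓ ≠ 0) :
    Module.finrank F (LinearMap.ker (lform ℓ)) = 2 := by
  obtain ⟨j, hj0⟩ := Function.ne_iff.mp hℓ
  have hj : ℓ j ≠ 0 := by simpa using hj0
  have hj' : lform ℓ (Pi.single j 1) = ℓ j := by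
    simp only [lform_apply]
    rw [Finset.sum_eq_single j]
    · simp
    · intro i _ hij; simp [Pi.single_apply, hij]
    · simp
  have hsurj : Function.Surjective (lform ℓ) := by
    intro c
    refine ⟨(c * (ℓ j)⁻¹) • (Pi.single j 1 : Fin 3 → F), ?_⟩
    rw [map_smul, hj']
    rw [smul_eq_mul, mul_assoc, inv_mul_cancel₀ hj, mul_one]
  have hrange : LinearMap.range (lform ℓ) = ⊤ := LinearMap.range_eq_top.mpr hsurj
  have h := LinearMap.finrank_range_add_finrank_ker (lform ℓ)
  rw [Module.finrank_fin_fun, hrange, finrank_top, Module.finrank_self] at h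
  omega

lemma pow_card_sub_one [Fintype F] [DecidableEq F] (a : F) :
    a ^ (Fintype.card F - 1) = if a = 0 then 0 else 1 := by
  split_ifs with h
  · subst h
    refine zero_pow ?_
    have := Fintype.one_lt_card (α := F)
    omega
  · exact FiniteField.pow_card_sub_one_eq_one a h

variable [Fintype F] [DecidableEq F]

lemma card_submodule_cast_zero (p h : ℕ) [Fact p.Prime] [CharP F p]
    (hq : Fintype.card F = p ^ h) (hh : 1 ≤ h)
    (W : Submodule F (Fin 3 → F)) [DecidablePred (· ∈ W)]
    (hW : 1 ≤ Module.finrank F W) :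
    ((Finset.univ.filter (fun v : Fin 3 → F => v ∈ W)).card : F) = 0 := by
  have hcard : Fintype.card W = Fintype.card F ^ Module.finrank F W :=
    Module.card_eq_pow_finrank
  have hfc : (Finset.univ.filter (fun v : Fin 3 → F => v ∈ W)).card = Fintype.card W :=
    (Fintype.card_subtype _).symm
  rw [hfc, hcard, hq, ← pow_mul]
  push_cast
  rw [CharP.cast_eq_zero F p]
  exact zero_pow (by positivity)

/-- The sum of `(x·v)^(q-1)` over a kernel of a linear form vanishes. -/
lemma sum_pow_ker (p h : ℕ) [Fact p.Prime] [CharP F p]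
    (hq : Fintype.card F = p ^ h) (hh : 1 ≤ h) (ℓ x : Fin 3 → F) :
    ∑ v ∈ Finset.univ.filter (fun v : Fin 3 → F => lform ℓ v = 0),
      (lform x v) ^ (Fintype.card F - 1) = 0 := by
  classical
  set A := Finset.univ.filter (fun v : Fin 3 → F => lform ℓ v = 0) with hA
  have h1 : ∑ v ∈ A, (lform x v) ^ (Fintype.card F - 1)
      = ∑ v ∈ A, (if lform x v ≠ 0 then (1 : F) else 0) := by
    refine Finset.sum_congr rfl fun v _ => ?_
    rw [pow_card_sub_one]
    by_cases hv : lform x v = 0 <;> simp [hv, -lform_apply]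
  rw [h1, Finset.sum_boole]
  -- card of A.filter (lform x · ≠ 0)
  have hAcard : (A.card : F) = 0 := by
    have : A = Finset.univ.filter (fun v : Fin 3 → F => v ∈ LinearMap.ker (lform ℓ)) := by
      ext v; rw [hA]; simp only [Finset.mem_filter]; simp [LinearMap.mem_ker]
    rw [this]
    exact card_submodule_cast_zero p h hq hh _ (le_trans (by norm_num) (two_le_finrank_ker ℓ))
  have hIcard : ((A.filter (fun v => lform x v = 0)).card : F) = 0 := by
    have : A.filter (fun v => lform x v = 0)
        = Finset.univ.filter
            (fun v : Fin 3 → F => v ∈ (LinearMap.ker (lform ℓ) ⊓ LinearMap.ker (lform x))) := by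
      ext v; rw [hA]; simp only [Finset.mem_filter]; simp [Finset.filter_filter, LinearMap.mem_ker, Submodule.mem_inf]
    rw [this]
    refine card_submodule_cast_zero p h hq hh _ ?_
    -- finrank of the intersection is at least 1
    have hsum := Submodule.finrank_sup_add_finrank_inf_eq
      (LinearMap.ker (lform ℓ)) (LinearMap.ker (lform x))
    have hsup : Module.finrank F
        ↥(LinearMap.ker (lform ℓ) ⊔ LinearMap.ker (lform x)) ≤ 3 := by
      have := Submodule.finrank_le (LinearMap.ker (lform ℓ) ⊔ LinearMap.ker (lform x))
      rwa [Module.finrank_fin_fun] at this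
    have h1 := two_le_finrank_ker (F := F) ℓ
    have h2 := two_le_finrank_ker (F := F) x
    omega
  have hsplit := Finset.card_filter_add_card_filter_not
    (s := A) (p := fun v => lform x v = 0)
  have : ((A.filter (fun v => lform x v = 0)).card : F)
      + ((A.filter (fun v => ¬ lform x v = 0)).card : F) = (A.card : F) := by
    exact_mod_cast congrArg (Nat.cast (R := F)) hsplit
  rw [hIcard, hAcard, zero_add] at this
  convert this using 2

end Aux

section Line

variable {F : Type*} [Field F] [Fintype F] [DecidableEq F]
  [Fintype (ℙ F (Fin 3 → F))] [DecidableEq (ℙ F (Fin 3 → F))]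

/-- Every line (in fact, kernel-of-a-form point set) of PG(2,q) is a ghost. -/
lemma line_ghost (p h : ℕ) [Fact p.Prime] [CharP F p]
    (hq : Fintype.card F = p ^ h) (hh : 1 ≤ h) (ℓ : Fin 3 → F) :
    powerSum (lineFinset ℓ) = 0 := by
  classical
  set q := Fintype.card F with hqdef
  have hq2 : 2 ≤ q := Fintype.one_lt_card
  have hevalzero : ∀ x : Fin 3 → F, eval x (powerSum (lineFinset ℓ)) = 0 := by
    intro x
    -- evaluation of the power sum
    have heval : eval x (powerSum (lineFinset ℓ))
        = ∑ P ∈ lineFinset ℓ, (lform x P.rep) ^ (q - 1) := by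
      simp only [powerSum, redeiFactor, map_sum, map_pow, map_mul, eval_C, eval_X]
      refine Finset.sum_congr rfl fun P _ => ?_
      congr 1
      simp only [lform_apply]
      exact Finset.sum_congr rfl fun i _ => mul_comm _ _
    rw [heval]
    -- the vector-level sum
    set A := Finset.univ.filter (fun v : Fin 3 → F => lform ℓ v = 0) with hA
    have h0A : (0 : Fin 3 → F) ∈ A := by
      rw [hA, Finset.mem_filter]; exact ⟨Finset.mem_univ _, map_zero _⟩
    set g : (Fin 3 → F) → F := fun v => (lform x v) ^ (q - 1) with hg
    have hsumA : ∑ v ∈ A, g v = 0 := sum_pow_ker p h hq hh ℓ x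
    have hg0 : g 0 = 0 := by
      simp only [hg, map_zero]
      exact zero_pow (by omega)
    have hsumA' : ∑ v ∈ A.erase 0, g v = 0 := by
      rw [Finset.sum_erase _ hg0]; exact hsumA
    -- projection to projective space
    have hne1 : ((fun _ => 1 : Fin 3 → F)) ≠ 0 :=
      Function.ne_iff.mpr ⟨0, one_ne_zero⟩
    set π : (Fin 3 → F) → ℙ F (Fin 3 → F) :=
      fun v => if hv : v ≠ 0 then Projectivization.mk F v hv
        else Projectivization.mk F (fun _ => 1) hne1 with hπ
    have hmaps : ∀ v ∈ A.erase 0, π v ∈ lineFinset ℓ := by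
      intro v hv
      obtain ⟨hv0, hvA⟩ := Finset.mem_erase.mp hv
      have hvker : lform ℓ v = 0 := by rw [hA, Finset.mem_filter] at hvA; exact hvA.2
      have hπv : π v = Projectivization.mk F v hv0 := by simp [hπ, hv0]
      rw [mem_lineFinset, hπv]
      obtain ⟨a, ha⟩ := (Projectivization.mk_eq_mk_iff F _ v
        (Projectivization.rep_nonzero _) hv0).mp (Projectivization.mk_rep _)
      rw [← ha, Units.smul_def, map_smul, smul_eq_mul, hvker, mul_zero]
    have hfiber : ∀ P ∈ lineFinset ℓ,
        ∑ v ∈ (A.erase 0).filter (fun v => π v = P), g v = (q - 1) • g P.rep := by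
      intro P hP
      have hfib_eq : (A.erase 0).filter (fun v => π v = P)
          = Finset.univ.image (fun c : Fˣ => (c : F) • P.rep) := by
        ext v
        simp only [Finset.mem_filter, Finset.mem_erase, Finset.mem_image,
          Finset.mem_univ, true_and]
        constructor
        · rintro ⟨⟨hv0, hvA⟩, hπv⟩
          have hπv' : Projectivization.mk F v hv0 = P := by
            rw [← hπv]; simp [hπ, hv0]
          have : Projectivization.mk F v hv0
              = Projectivization.mk F P.rep (Projectivization.rep_nonzero P) := by
            rw [hπv', Projectivization.mk_rep]
          obtain ⟨a, ha⟩ := (Projectivization.mk_eq_mk_iff F v P.rep hv0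
            (Projectivization.rep_nonzero P)).mp this
          exact ⟨a, ha⟩
        · rintro ⟨c, rfl⟩
          have hvrep : (c : F) • P.rep ≠ 0 :=
            smul_ne_zero (Units.ne_zero c) (Projectivization.rep_nonzero P)
          have hPker : lform ℓ P.rep = 0 := mem_lineFinset.mp hP
          refine ⟨⟨hvrep, ?_⟩, ?_⟩
          · simp only [hA, Finset.mem_filter, Finset.mem_univ, true_and]
            rw [map_smul, hPker, smul_zero]
          · have : Projectivization.mk F ((c : F) • P.rep) hvrep
                = Projectivization.mk F P.rep (Projectivization.rep_nonzero P) := by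
              rw [Projectivization.mk_eq_mk_iff]
              exact ⟨c, rfl⟩
            simp only [hπ, dif_pos hvrep]
            rw [this, Projectivization.mk_rep]
      rw [hfib_eq]
      have hinj : Function.Injective (fun c : Fˣ => (c : F) • P.rep) := by
        intro c c' hcc
        simp only at hcc
        have h1 : ((c : F) - (c' : F)) • P.rep = 0 := by
          rw [sub_smul, hcc, sub_self]
        rcases smul_eq_zero.mp h1 with hc | hc
        · exact Units.ext (sub_eq_zero.mp hc)
        · exact absurd hc (Projectivization.rep_nonzero P)
      rw [Finset.sum_image (fun a _ b _ hab => hinj hab)]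
      have hgc : ∀ c : Fˣ, g ((c : F) • P.rep) = g P.rep := by
        intro c
        simp only [hg, map_smul, smul_eq_mul, mul_pow]
        rw [FiniteField.pow_card_sub_one_eq_one _ (Units.ne_zero c), one_mul]
      simp only [hgc]
      rw [Finset.sum_const, Finset.card_univ, Fintype.card_units]
    have hfibers := Finset.sum_fiberwise_of_maps_to hmaps g
    rw [Finset.sum_congr rfl hfiber] at hfibers
    rw [hsumA'] at hfibers
    -- now: ∑ P, (q-1) • g P.rep = 0; and (q-1 : F) = -1
    have hq1 : ((q - 1 : ℕ) : F) = -1 := by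
      rw [Nat.cast_sub (by omega), Nat.cast_one]
      have : ((q : ℕ) : F) = 0 := by
        rw [hq]
        push_cast
        rw [CharP.cast_eq_zero F p]
        exact zero_pow (by omega)
      rw [this]; ring
    have : ∑ P ∈ lineFinset ℓ, (q - 1) • g P.rep
        = ((q - 1 : ℕ) : F) * ∑ P ∈ lineFinset ℓ, g P.rep := by
      rw [Finset.mul_sum]
      exact Finset.sum_congr rfl fun P _ => (nsmul_eq_mul _ _)
    rw [this, hq1, neg_one_mul, neg_eq_zero] at hfibers
    exact hfibers
  have htot : (powerSum (lineFinset ℓ)).totalDegree ≤ q - 1 := by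
    refine le_trans (totalDegree_finset_sum _ _) (Finset.sup_le fun P _ => ?_)
    refine le_trans (totalDegree_pow _ _) ?_
    have hred : (redeiFactor P).totalDegree ≤ 1 := by
      refine le_trans (totalDegree_finset_sum _ _) (Finset.sup_le fun i _ => ?_)
      refine le_trans (totalDegree_mul _ _) ?_
      simp [totalDegree_C, totalDegree_X]
    calc (q - 1) * (redeiFactor P).totalDegree ≤ (q - 1) * 1 :=
          Nat.mul_le_mul_left _ hred
      _ = q - 1 := by omega
  -- transfer across universes via `rename`
  have hinj : Function.Injective
      (rename (R := F) (Equiv.ulift.symm : Fin 3 ≃ ULift (Fin 3))) :=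
    rename_injective _ (Equiv.ulift.symm.injective)
  apply hinj
  rw [map_zero]
  apply eq_zero_of_eval_eq_zero
  · intro v
    rw [eval_rename]
    exact hevalzero _
  · rw [mem_restrictDegree]
    intro s hs i
    refine degreeOf_le_iff.mp (le_trans (degreeOf_le_totalDegree _ i) ?_) s hs
    exact le_trans (totalDegree_rename_le _ _) htot

/-- Two distinct points determine a unique line. -/
lemma line_unique {a b : Fin 3 → F} (ha : a ≠ 0) (hb : b ≠ 0)
    {P Q : ℙ F (Fin 3 → F)} (hPQ : P ≠ Q)
    (hPa : P ∈ lineFinset a) (hQa : Q ∈ lineFinset a)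
    (hPb : P ∈ lineFinset b) (hQb : Q ∈ lineFinset b) :
    lineFinset a = lineFinset b := by
  classical
  have hind : LinearIndependent F (Projectivization.rep ∘ ![P, Q]) :=
    Projectivization.independent_iff.mp
      ((Projectivization.independent_pair_iff_ne P Q).mpr hPQ)
  set W := Submodule.span F (Set.range (Projectivization.rep ∘ ![P, Q])) with hW
  have hWrank : Module.finrank F W = 2 := by
    rw [hW, finrank_span_eq_card hind, Fintype.card_fin]
  have key : ∀ c : Fin 3 → F, c ≠ 0 → P ∈ lineFinset c → Q ∈ lineFinset c →
      LinearMap.ker (lform c) = W := by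
    intro c hc hPc hQc
    have hle : W ≤ LinearMap.ker (lform c) := by
      rw [hW, Submodule.span_le]
      rw [Set.range_subset_iff]
      intro i
      fin_cases i
      · simpa [LinearMap.mem_ker] using mem_lineFinset.mp hPc
      · simpa [LinearMap.mem_ker] using mem_lineFinset.mp hQc
    exact (Submodule.eq_of_le_of_finrank_le hle
      (by rw [hWrank, finrank_ker_eq_two hc])).symm
  have hker : LinearMap.ker (lform a) = LinearMap.ker (lform b) := by
    rw [key a ha hPa hQa, key b hb hPb hQb]
  ext R
  rw [mem_lineFinset, mem_lineFinset, ← LinearMap.mem_ker, ← LinearMap.mem_ker, hker]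

end Line

/-- A partial pencil of λp+1 distinct lines through a common point of PG(2,q), q = p^h,
0 ≤ λ ≤ p^(h-1), is a ghost. -/
theorem partial_pencil_ghost (p h : ℕ) [Fact p.Prime]
    {F : Type*} [Field F] [Fintype F] [DecidableEq F] [CharP F p]
    [Fintype (ℙ F (Fin 3 → F))] [DecidableEq (ℙ F (Fin 3 → F))]
    (hq : Fintype.card F = p ^ h) (hh : 1 ≤ h)
    (lam : ℕ) (hlam : lam ≤ p ^ (h - 1))
    (Pen : Finset (Finset (ℙ F (Fin 3 → F))))
    (hlines : ∀ l ∈ Pen, ∃ ℓ : Fin 3 → F, ℓ ≠ 0 ∧ l = lineFinset ℓ)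
    (P₀ : ℙ F (Fin 3 → F)) (hP₀ : ∀ l ∈ Pen, P₀ ∈ l)
    (hcard : Pen.card = lam * p + 1) :
    powerSum (Pen.biUnion id) = 0 := by
  classical
  set f : ℙ F (Fin 3 → F) → MvPolynomial (Fin 3) F :=
    fun P => redeiFactor P ^ (Fintype.card F - 1) with hf
  -- two lines in the pencil sharing a point other than P₀ coincide
  have huniq : ∀ l ∈ Pen, ∀ l' ∈ Pen, ∀ P : ℙ F (Fin 3 → F),
      P ∈ l → P ∈ l' → P ≠ P₀ → l = l' := by
    intro l hl l' hl' P hPl hPl' hne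
    obtain ⟨a, ha, rfl⟩ := hlines l hl
    obtain ⟨b, hb, rfl⟩ := hlines l' hl'
    exact line_unique ha hb hne hPl (hP₀ _ hl) hPl' (hP₀ _ hl')
  -- sum over the pencil of the power sums vanishes
  have hzero : ∑ l ∈ Pen, powerSum l = 0 := by
    refine Finset.sum_eq_zero fun l hl => ?_
    obtain ⟨a, _, rfl⟩ := hlines l hl
    exact line_ghost p h hq hh a
  -- exchange the double sum
  have hsub : ∀ l ∈ Pen, l ⊆ Pen.biUnion id := by
    intro l hl P hP
    exact Finset.mem_biUnion.mpr ⟨l, hl, hP⟩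
  have hexch : ∑ l ∈ Pen, powerSum l
      = ∑ P ∈ Pen.biUnion id, (Pen.filter (fun l => P ∈ l)).card • f P := by
    have step1 : ∀ l ∈ Pen, powerSum l
        = ∑ P ∈ Pen.biUnion id, if P ∈ l then f P else 0 := by
      intro l hl
      rw [Finset.sum_ite, Finset.sum_const_zero, add_zero]
      have : (Pen.biUnion id).filter (fun P => P ∈ l) = l := by
        ext P
        simp only [Finset.mem_filter]
        exact ⟨fun h' => h'.2, fun h' => ⟨hsub l hl h', h'⟩⟩
      rw [this]
      rfl
    rw [Finset.sum_congr rfl step1, Finset.sum_comm]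
    refine Finset.sum_congr rfl fun P _ => ?_
    rw [Finset.sum_ite, Finset.sum_const_zero, add_zero, Finset.sum_const]
  have hone : ∀ P ∈ Pen.biUnion id, (Pen.filter (fun l => P ∈ l)).card • f P = f P := by
    intro P hP
    by_cases hPP : P = P₀
    · subst hPP
      have hfilt : Pen.filter (fun l => P ∈ l) = Pen :=
        Finset.filter_true_of_mem fun l hl => hP₀ l hl
      rw [hfilt, hcard, succ_nsmul]
      have hp0 : ((lam * p : ℕ) : MvPolynomial (Fin 3) F) = 0 := by
        have hpz : ((p : ℕ) : MvPolynomial (Fin 3) F) = 0 := by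
          rw [← map_natCast (C : F →+* MvPolynomial (Fin 3) F) p,
            CharP.cast_eq_zero, map_zero]
        rw [Nat.cast_mul, hpz, mul_zero]
      rw [nsmul_eq_mul, hp0, zero_mul, zero_add]
    · obtain ⟨l, hl, hPl⟩ := Finset.mem_biUnion.mp hP
      have hPl' : P ∈ l := hPl
      have hfilt : Pen.filter (fun l' => P ∈ l') = {l} := by
        rw [Finset.eq_singleton_iff_unique_mem]
        refine ⟨Finset.mem_filter.mpr ⟨hl, hPl'⟩, fun l' hl' => ?_⟩
        exact huniq l' (Finset.mem_filter.mp hl').1 l hl P (Finset.mem_filter.mp hl').2 hPl' hPP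
      rw [hfilt, Finset.card_singleton, one_nsmul]
  calc powerSum (Pen.biUnion id) = ∑ P ∈ Pen.biUnion id, f P := rfl
    _ = ∑ P ∈ Pen.biUnion id, (Pen.filter (fun l => P ∈ l)).card • f P :=
        (Finset.sum_congr rfl hone).symm
    _ = 0 := by rw [← hexch, hzero]
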